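/- Let f:(0,∞)→(0,∞) be GH-convex, i.e., f(u^α v^{1-α}) ≤ (α/f(u)+(1-α)/f(v))^{-1} for u,v>0, α∈[0,1], and let g(x,y)=y f(x/y). Then g is jointly GG-convex: g(a^α b^{1-α}, x^α y^{1-α}) ≤ g(a,x)^α g(b,y)^{1-α} for all a,b,x,y>0 and α∈[0,1]. -/
import Mathlib


theorem perspective_gh_implies_gg (f : ℝ → ℝ) (hf : ∀ x ∈ Set.Ioi (0:ℝ), 0 < f x)
    (hGH : ∀ u ∈ Set.Ioi (0:ℝ), ∀ v ∈ Set.Ioi (0:ℝ), ∀ α ∈ Set.Icc (0:ℝ) 1,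
      f (u ^ α * v ^ (1 - α)) ≤ (α / f u + (1 - α) / f v)⁻¹)
    (g : ℝ → ℝ → ℝ) (hg : ∀ x y : ℝ, g x y = y * f (x / y)) :
    ∀ a ∈ Set.Ioi (0:ℝ), ∀ b ∈ Set.Ioi (0:ℝ), ∀ x ∈ Set.Ioi (0:ℝ), ∀ y ∈ Set.Ioi (0:ℝ),
      ∀ α ∈ Set.Icc (0:ℝ) 1,
      g (a ^ α * b ^ (1 - α)) (x ^ α * y ^ (1 - α)) ≤ g a x ^ α * g b y ^ (1 - α) := by
  intro a ha b hb x hx y hy α hα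
  simp only [Set.mem_Ioi] at ha hb hx hy
  obtain ⟨hα0, hα1⟩ := hα
  have h1α : (0:ℝ) ≤ 1 - α := by linarith
  have hu : a / x ∈ Set.Ioi (0:ℝ) := Set.mem_Ioi.2 (by positivity)
  have hv : b / y ∈ Set.Ioi (0:ℝ) := Set.mem_Ioi.2 (by positivity)
  have hp := hf _ hu
  have hq := hf _ hv
  set p := f (a / x) with hpdef
  set q := f (b / y) with hqdef
  have hxy : (0:ℝ) < x ^ α * y ^ (1 - α) := by positivity
  have key : (a ^ α * b ^ (1 - α)) / (x ^ α * y ^ (1 - α)) = (a / x) ^ α * (b / y) ^ (1 - α) := by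
    rw [Real.div_rpow ha.le hx.le, Real.div_rpow hb.le hy.le, mul_div_mul_comm]
  rw [hg, hg, hg, key]
  have hgm : (p⁻¹) ^ α * (q⁻¹) ^ (1 - α) ≤ α * p⁻¹ + (1 - α) * q⁻¹ :=
    Real.geom_mean_le_arith_mean2_weighted hα0 h1α (by positivity) (by positivity) (by ring)
  have hgmpos : (0:ℝ) < (p⁻¹) ^ α * (q⁻¹) ^ (1 - α) := by positivity
  have hspos : (0:ℝ) < α / p + (1 - α) / q := by
    calc (0:ℝ) < (p⁻¹) ^ α * (q⁻¹) ^ (1 - α) := hgmpos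
    _ ≤ α * p⁻¹ + (1 - α) * q⁻¹ := hgm
    _ = α / p + (1 - α) / q := by ring
  have hHG : (α / p + (1 - α) / q)⁻¹ ≤ p ^ α * q ^ (1 - α) := by
    rw [inv_le_iff_one_le_mul₀ hspos]
    have : ((p⁻¹) ^ α * (q⁻¹) ^ (1 - α)) * (p ^ α * q ^ (1 - α)) = 1 := by
      rw [Real.inv_rpow hp.le, Real.inv_rpow hq.le]
      field_simp
    calc (1:ℝ) = ((p⁻¹) ^ α * (q⁻¹) ^ (1 - α)) * (p ^ α * q ^ (1 - α)) := this.symm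
    _ ≤ (α * p⁻¹ + (1 - α) * q⁻¹) * (p ^ α * q ^ (1 - α)) := by
        apply mul_le_mul_of_nonneg_right hgm (by positivity)
    _ = p ^ α * q ^ (1 - α) * (α / p + (1 - α) / q) := by ring
  have h1 := hGH _ hu _ hv α ⟨hα0, hα1⟩
  calc (x ^ α * y ^ (1 - α)) * f ((a / x) ^ α * (b / y) ^ (1 - α))
      ≤ (x ^ α * y ^ (1 - α)) * (α / p + (1 - α) / q)⁻¹ :=
        mul_le_mul_of_nonneg_left h1 hxy.le
    _ ≤ (x ^ α * y ^ (1 - α)) * (p ^ α * q ^ (1 - α)) :=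
        mul_le_mul_of_nonneg_left hHG hxy.le
    _ = (x * p) ^ α * (y * q) ^ (1 - α) := by
        rw [Real.mul_rpow hx.le hp.le, Real.mul_rpow hy.le hq.le]; ring
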